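/- In C^{⊗3} one has [(∂⊗1⊗1 + 1⊗∂⊗1 + 1⊗1⊗∂) ∘ Δ_3 + (−Δ_2⊗1 + 1⊗Δ_2) ∘ Δ_2](P) = 0, where the maps 1⊗∂⊗1 and 1⊗1⊗∂ are evaluated with the Koszul sign convention; i.e. Δ_3 is a chain homotopy between (Δ_2⊗1)Δ_2 and (1⊗Δ_2)Δ_2 evaluated at the 2-cell P. -/

import Mathlib

noncomputable section

/-- Cells of an `n`-gon: `v i` models the vertex `v_{i+1}`, `e i` models the edge `e_{i+1}`
(so indices are 0-based), and `F` models the 2-cell `P`. -/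
inductive Cell (n : ℕ) : Type where
  | v : Fin n → Cell n
  | e : Fin n → Cell n
  | F : Cell n
deriving DecidableEq

/-- `Tens R n k` models `C^{⊗ k}`, the free `R`-module on `k`-tuples of cells. -/
abbrev Tens (R : Type) [CommRing R] (n k : ℕ) : Type := (Fin k → Cell n) →₀ R

/-- The basis tensor corresponding to a tuple of cells. -/
def bt (R : Type) [CommRing R] {n k : ℕ} (x : Fin k → Cell n) : Tens R n k :=
  Finsupp.single x 1

/-- Degree of a cell. -/
def degC {n : ℕ} : Cell n → ℕ
  | .v _ => 0
  | .e _ => 1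
  | .F => 2

/-- `(-1)^m` in `R`. -/
def sgn (R : Type) [CommRing R] (m : ℤ) : R := if Even m then 1 else -1

/-- The boundary operator on basis cells: `∂(v_i) = 0`, `∂(e_i) = v_{i+1} - v_i` for `i < n`,
`∂(e_n) = v_n - v_1`, `∂(P) = e_1 + ⋯ + e_{n-1} - e_n`. -/
def dB (R : Type) [CommRing R] (n : ℕ) : Cell n → Tens R n 1
  | .v _ => 0
  | .e i =>
      if h : (i : ℕ) + 1 < n then
        bt R (fun _ => Cell.v ⟨(i : ℕ) + 1, h⟩) - bt R (fun _ => Cell.v i)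
      else
        bt R (fun _ => Cell.v i) - bt R (fun _ => Cell.v ⟨0, i.pos⟩)
  | .F => ∑ i : Fin n, (if (i : ℕ) + 1 < n then (1 : R) else -1) • bt R (fun _ => Cell.e i)

/-- `Σ_{0<i_1<⋯<i_k<n} e_{i_1} ⊗ ⋯ ⊗ e_{i_k}` (with 0-based indices: strictly increasing
tuples of edge indices all `< n-1`). -/
def esum (R : Type) [CommRing R] (n k : ℕ) : Tens R n k :=
  ∑ f : Fin k → Fin n,
    if (∀ p q : Fin k, p < q → f p < f q) ∧ (∀ p : Fin k, ((f p) : ℕ) + 1 < n) then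
      bt R (fun p => Cell.e (f p))
    else 0

/-- The `A_∞`-coalgebra operations on basis cells: `DeltaB R n 2` is the Kravatz diagonal
`Δ₂` and for `k ≥ 3`, `DeltaB R n k` is `Δ_k`, which vanishes on vertices and edges and sends
`P` to `Σ_{0<i_1<⋯<i_k<n} e_{i_1} ⊗ ⋯ ⊗ e_{i_k}`. -/
def DeltaB (R : Type) [CommRing R] (n : ℕ) (k : ℕ) : Cell n → Tens R n k
  | .v i => if k = 2 then bt R (fun _ => Cell.v i) else 0
  | .e i =>
      if k = 2 then
        if h : (i : ℕ) + 1 < n then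
          bt R (fun p => if (p : ℕ) = 0 then Cell.v i else Cell.e i) +
            bt R (fun p => if (p : ℕ) = 0 then Cell.e i else Cell.v ⟨(i : ℕ) + 1, h⟩)
        else
          bt R (fun p => if (p : ℕ) = 0 then Cell.v ⟨0, i.pos⟩ else Cell.e i) +
            bt R (fun p => if (p : ℕ) = 0 then Cell.e i else Cell.v i)
      else 0
  | .F =>
      esum R n k +
        (if h : k = 2 ∧ 0 < n then
          bt R (fun p => if (p : ℕ) = 0 then Cell.v ⟨0, h.2⟩ else Cell.F) +
            bt R (fun p => if (p : ℕ) = 0 then Cell.F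
                  else Cell.v ⟨n - 1, Nat.sub_lt h.2 Nat.one_pos⟩)
        else 0)

/-- Extension of a map defined on basis tensors to a linear map. -/
def lext (R : Type) [CommRing R] (n : ℕ) {k m : ℕ} (φ : (Fin k → Cell n) → Tens R n m) :
    Tens R n k →ₗ[R] Tens R n m :=
  Finsupp.linearCombination R φ

/-- Splicing a `j`-tuple into a `k`-tuple at position `a`, producing an `m`-tuple
(meaningful when `m = k + j - 1` and `a < k`). -/
def splice {n k j : ℕ} (m a : ℕ) (x : Fin k → Cell n) (y : Fin j → Cell n) :
    Fin m → Cell n := fun q =>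
  if h1 : (q : ℕ) < a ∧ (q : ℕ) < k then x ⟨q, h1.2⟩
  else if h2 : a ≤ (q : ℕ) ∧ (q : ℕ) - a < j then y ⟨(q : ℕ) - a, h2.2⟩
  else if h3 : (q : ℕ) + 1 - j < k then x ⟨(q : ℕ) + 1 - j, h3⟩
  else Cell.F

/-- `opp R n k m j a p g` is the linear map `1^{⊗a} ⊗ g ⊗ 1^{⊗(k-1-a)} : C^{⊗k} → C^{⊗m}`
(meaningful when `m = k + j - 1`), where `g` is the basis-level description of an operation
`C → C^{⊗j}` of degree `p`, evaluated with the Koszul sign convention. -/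
def opp (R : Type) [CommRing R] (n : ℕ) (k m j a : ℕ) (p : ℤ) (g : Cell n → Tens R n j) :
    Tens R n k →ₗ[R] Tens R n m :=
  lext R n fun x =>
    if ha : a < k then
      sgn R (p * ∑ q : Fin k, if (q : ℕ) < a then (degC (x q) : ℤ) else 0) •
        Finsupp.mapDomain (splice m a x) (g (x ⟨a, ha⟩))
    else 0

/-- `Δ_k` as a linear map `C → C^{⊗k}`. -/
def Dmap (R : Type) [CommRing R] (n k : ℕ) : Tens R n 1 →ₗ[R] Tens R n k :=
  lext R n fun x => DeltaB R n k (x 0)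

/-- The boundary `∂` as a linear map `C → C`. -/
def bdry (R : Type) [CommRing R] (n : ℕ) : Tens R n 1 →ₗ[R] Tens R n 1 :=
  lext R n fun x => dB R n (x 0)

/-- The top cell `P` as a chain. -/
def cellP (R : Type) [CommRing R] (n : ℕ) : Tens R n 1 := bt R (fun _ => Cell.F)

end
noncomputable section Helper

variable {R : Type} [CommRing R] {n : ℕ}

lemma lext_bt {k m : ℕ} (φ : (Fin k → Cell n) → Tens R n m) (x) : lext R n φ (bt R x) = φ x := by
  simp [lext, bt, Finsupp.linearCombination_single]

lemma Dmap_cellP (k : ℕ) : Dmap R n k (cellP R n) = DeltaB R n k Cell.F := by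
  simp [Dmap, cellP, lext_bt]

lemma opp_bt {k m j a : ℕ} (p : ℤ) (g : Cell n → Tens R n j) (x : Fin k → Cell n) :
    opp R n k m j a p g (bt R x) =
      if ha : a < k then
        sgn R (p * ∑ q : Fin k, if (q : ℕ) < a then (degC (x q) : ℤ) else 0) •
          Finsupp.mapDomain (splice m a x) (g (x ⟨a, ha⟩))
      else 0 := by
  simp [opp, lext]
  rw [bt, Finsupp.linearCombination_single, one_smul]

/-- vertex with junk default -/
def vN (n : ℕ) (i : ℕ) : Cell n := if h : i < n then .v ⟨i, h⟩ else .F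
def eN (n : ℕ) (i : ℕ) : Cell n := if h : i < n then .e ⟨i, h⟩ else .F

lemma vN_coe (i : Fin n) : vN n (i : ℕ) = .v i := by simp [vN]
lemma eN_coe (i : Fin n) : eN n (i : ℕ) = .e i := by simp [eN]

end Helper

noncomputable section Helper2
variable {R : Type} [CommRing R] {n : ℕ}

lemma splice_3_0_1 (x : Fin 3 → Cell n) (c : Cell n) :
    splice 3 0 x (fun _ : Fin 1 => c) = ![c, x 1, x 2] := by
  funext q; fin_cases q <;> simp [splice]

lemma splice_3_1_1 (x : Fin 3 → Cell n) (c : Cell n) :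
    splice 3 1 x (fun _ : Fin 1 => c) = ![x 0, c, x 2] := by
  funext q; fin_cases q <;> simp [splice]

lemma splice_3_2_1 (x : Fin 3 → Cell n) (c : Cell n) :
    splice 3 2 x (fun _ : Fin 1 => c) = ![x 0, x 1, c] := by
  funext q; fin_cases q <;> simp [splice]

lemma splice_2_0_2 (x : Fin 2 → Cell n) (y : Fin 2 → Cell n) :
    splice 3 0 x y = ![y 0, y 1, x 1] := by
  funext q; fin_cases q <;> simp [splice]

lemma splice_2_1_2 (x : Fin 2 → Cell n) (y : Fin 2 → Cell n) :
    splice 3 1 x y = ![x 0, y 0, y 1] := by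
  funext q; fin_cases q <;> simp [splice]

lemma pairfun (A B : Cell n) : (fun p : Fin 2 => if (p : ℕ) = 0 then A else B) = ![A, B] := by
  funext p; fin_cases p <;> simp

end Helper2

noncomputable section Helper3
variable {R : Type} [CommRing R] {n : ℕ}

lemma mapDomain_sub {α β : Type} (g : α → β) (x y : α →₀ R) :
    Finsupp.mapDomain g (x - y) = Finsupp.mapDomain g x - Finsupp.mapDomain g y :=
  map_sub (Finsupp.mapDomain.addMonoidHom g) x y

lemma mapDomain_add' {α β : Type} (g : α → β) (x y : α →₀ R) :
    Finsupp.mapDomain g (x + y) = Finsupp.mapDomain g x + Finsupp.mapDomain g y :=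
  Finsupp.mapDomain_add

lemma constfun (A : Cell n) : (fun _ : Fin 2 => A) = ![A, A] := by
  funext p; fin_cases p <;> simp

lemma dB_e (i : Fin n) (h : (i : ℕ) + 1 < n) :
    dB R n (.e i) = bt R (fun _ => vN n ((i : ℕ) + 1)) - bt R (fun _ => vN n i) := by
  simp [dB, h, vN]

lemma DeltaB2_e (i : Fin n) (h : (i : ℕ) + 1 < n) :
    DeltaB R n 2 (.e i) = bt R ![.v i, .e i] + bt R ![.e i, vN n ((i : ℕ) + 1)] := by
  rw [DeltaB, if_pos rfl, dif_pos h, pairfun, pairfun]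
  simp [vN, h]

lemma DeltaB2_v (i : Fin n) : DeltaB R n 2 (.v i) = bt R ![.v i, .v i] := by
  rw [DeltaB, if_pos rfl, constfun]

lemma DeltaB2_F (h : 0 < n) :
    DeltaB R n 2 .F = esum R n 2 + (bt R ![vN n 0, .F] + bt R ![.F, vN n (n - 1)]) := by
  rw [DeltaB, dif_pos ⟨rfl, h⟩, pairfun, pairfun]
  simp [vN, h, Nat.sub_lt h Nat.one_pos]

lemma DeltaB3_F : DeltaB R n 3 .F = esum R n 3 := by
  rw [DeltaB]; simp

lemma oppA0 (f : Fin 3 → Fin n) (hb : ((f 0 : ℕ)) + 1 < n) :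
    opp R n 3 3 1 0 (-1) (dB R n) (bt R (fun p => Cell.e (f p))) =
      bt R ![vN n ((f 0 : ℕ) + 1), .e (f 1), .e (f 2)] -
        bt R ![vN n (f 0 : ℕ), .e (f 1), .e (f 2)] := by
  rw [opp_bt, dif_pos (by omega)]
  simp only [show (⟨0, by omega⟩ : Fin 3) = 0 from rfl]
  rw [dB_e _ hb]
  rw [mapDomain_sub, bt, bt, Finsupp.mapDomain_single, Finsupp.mapDomain_single,
    splice_3_0_1, splice_3_0_1]
  have : sgn R (-1 * ∑ q : Fin 3, if (q : ℕ) < 0 then (degC (Cell.e (f q)) : ℤ) else 0) = 1 := by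
    simp [sgn]
  rw [this, one_smul, vN_coe]
  rfl

end Helper3

noncomputable section Helper4
variable {R : Type} [CommRing R] {n : ℕ}

lemma oppA1 (f : Fin 3 → Fin n) (hb : ((f 1 : ℕ)) + 1 < n) :
    opp R n 3 3 1 1 (-1) (dB R n) (bt R (fun p => Cell.e (f p))) =
      bt R ![.e (f 0), vN n (f 1 : ℕ), .e (f 2)] -
        bt R ![.e (f 0), vN n ((f 1 : ℕ) + 1), .e (f 2)] := by
  rw [opp_bt, dif_pos (by omega)]
  simp only [show (⟨1, by omega⟩ : Fin 3) = 1 from rfl]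
  rw [dB_e _ hb]
  rw [mapDomain_sub, bt, bt, Finsupp.mapDomain_single, Finsupp.mapDomain_single,
    splice_3_1_1, splice_3_1_1]
  have hs : (∑ q : Fin 3, if (q : ℕ) < 1 then (degC (Cell.e (f q)) : ℤ) else 0) = 1 := by
    rw [Fin.sum_univ_three]; norm_num [degC]
  have : sgn R (-1 * ∑ q : Fin 3, if (q : ℕ) < 1 then (degC (Cell.e (f q)) : ℤ) else 0)
      = -1 := by
    rw [hs]; norm_num [sgn]
  rw [this, vN_coe, neg_smul, one_smul, neg_sub]
  rfl

lemma oppA2 (f : Fin 3 → Fin n) (hb : ((f 2 : ℕ)) + 1 < n) :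
    opp R n 3 3 1 2 (-1) (dB R n) (bt R (fun p => Cell.e (f p))) =
      bt R ![.e (f 0), .e (f 1), vN n ((f 2 : ℕ) + 1)] -
        bt R ![.e (f 0), .e (f 1), vN n (f 2 : ℕ)] := by
  rw [opp_bt, dif_pos (by omega)]
  simp only [show (⟨2, by omega⟩ : Fin 3) = 2 from rfl]
  rw [dB_e _ hb]
  rw [mapDomain_sub, bt, bt, Finsupp.mapDomain_single, Finsupp.mapDomain_single,
    splice_3_2_1, splice_3_2_1]
  have hs : (∑ q : Fin 3, if (q : ℕ) < 2 then (degC (Cell.e (f q)) : ℤ) else 0) = 2 := by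
    rw [Fin.sum_univ_three]; norm_num [degC]
  have : sgn R (-1 * ∑ q : Fin 3, if (q : ℕ) < 2 then (degC (Cell.e (f q)) : ℤ) else 0)
      = 1 := by
    rw [hs]; norm_num [sgn]
  rw [this, vN_coe, one_smul]
  rfl

lemma sgn_zero_mul (z : ℤ) : sgn R (0 * z) = 1 := by norm_num [sgn]

lemma oppL_pair (g : Fin 2 → Fin n) (hb : ((g 0 : ℕ)) + 1 < n) :
    opp R n 2 3 2 0 0 (DeltaB R n 2) (bt R (fun p => Cell.e (g p))) =
      bt R ![.v (g 0), .e (g 0), .e (g 1)] +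
        bt R ![.e (g 0), vN n ((g 0 : ℕ) + 1), .e (g 1)] := by
  rw [opp_bt, dif_pos (by omega)]
  simp only [show (⟨0, by omega⟩ : Fin 2) = 0 from rfl]
  rw [DeltaB2_e _ hb, mapDomain_add', bt, bt, Finsupp.mapDomain_single, Finsupp.mapDomain_single,
    splice_2_0_2, splice_2_0_2, sgn_zero_mul, one_smul]
  simp only [Matrix.cons_val_zero, Matrix.cons_val_one, Matrix.head_cons]
  rfl

lemma oppR_pair (g : Fin 2 → Fin n) (hb : ((g 1 : ℕ)) + 1 < n) :
    opp R n 2 3 2 1 0 (DeltaB R n 2) (bt R (fun p => Cell.e (g p))) =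
      bt R ![.e (g 0), .v (g 1), .e (g 1)] +
        bt R ![.e (g 0), .e (g 1), vN n ((g 1 : ℕ) + 1)] := by
  rw [opp_bt, dif_pos (by omega)]
  simp only [show (⟨1, by omega⟩ : Fin 2) = 1 from rfl]
  rw [DeltaB2_e _ hb, mapDomain_add', bt, bt, Finsupp.mapDomain_single, Finsupp.mapDomain_single,
    splice_2_1_2, splice_2_1_2, sgn_zero_mul, one_smul]
  simp only [Matrix.cons_val_zero, Matrix.cons_val_one, Matrix.head_cons]
  rfl

end Helper4

noncomputable section Helper5
variable {R : Type} [CommRing R] {n : ℕ}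

abbrev Cnd (n k : ℕ) (f : Fin k → Fin n) : Prop :=
  (∀ p q : Fin k, p < q → f p < f q) ∧ (∀ p : Fin k, ((f p) : ℕ) + 1 < n)

lemma esum_eq (k : ℕ) :
    esum R n k = ∑ f : Fin k → Fin n,
      if Cnd n k f then bt R (fun p => Cell.e (f p)) else 0 := rfl

lemma lmap_esum {k m : ℕ} (L : Tens R n k →ₗ[R] Tens R n m) :
    L (esum R n k) = ∑ f : Fin k → Fin n,
      if Cnd n k f then L (bt R fun p => Cell.e (f p)) else 0 := by
  rw [esum_eq, map_sum]
  exact Finset.sum_congr rfl fun f _ => by split_ifs <;> simp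

lemma mapDomain_esum {k : ℕ} (h : (Fin k → Cell n) → (Fin 3 → Cell n)) :
    Finsupp.mapDomain h (esum R n k) = ∑ f : Fin k → Fin n,
      if Cnd n k f then Finsupp.mapDomain h (bt R fun p => Cell.e (f p)) else 0 := by
  rw [esum_eq]
  rw [show (Finsupp.mapDomain h : ((Fin k → Cell n) →₀ R) → ((Fin 3 → Cell n) →₀ R)) =
      ⇑(Finsupp.mapDomain.addMonoidHom h) from rfl, map_sum]
  exact Finset.sum_congr rfl fun f _ => by
    split_ifs <;> simp [Finsupp.mapDomain.addMonoidHom_apply]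

lemma oppL_U1 (h : 0 < n) :
    opp R n 2 3 2 0 0 (DeltaB R n 2) (bt R ![vN n 0, .F]) =
      bt R ![vN n 0, vN n 0, .F] := by
  rw [opp_bt, dif_pos (by omega), sgn_zero_mul, one_smul]
  simp only [show (⟨0, by omega⟩ : Fin 2) = 0 from rfl, Matrix.cons_val_zero]
  have hv : vN n 0 = Cell.v ⟨0, h⟩ := dif_pos h
  rw [hv, DeltaB2_v, bt, Finsupp.mapDomain_single, splice_2_0_2]
  simp only [Matrix.cons_val_zero, Matrix.cons_val_one, Matrix.head_cons]
  rfl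

lemma oppR_U2 (h : 0 < n) :
    opp R n 2 3 2 1 0 (DeltaB R n 2) (bt R ![.F, vN n (n - 1)]) =
      bt R ![.F, vN n (n - 1), vN n (n - 1)] := by
  rw [opp_bt, dif_pos (by omega), sgn_zero_mul, one_smul]
  simp only [show (⟨1, by omega⟩ : Fin 2) = 1 from rfl, Matrix.cons_val_one, Matrix.head_cons,
    Matrix.cons_val_zero]
  have hv : vN n (n - 1) = Cell.v ⟨n - 1, by omega⟩ := dif_pos (by omega)
  rw [hv, DeltaB2_v, bt, Finsupp.mapDomain_single, splice_2_1_2]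
  simp only [Matrix.cons_val_zero, Matrix.cons_val_one, Matrix.head_cons]
  rfl

lemma oppR_U1 (h : 0 < n) :
    opp R n 2 3 2 1 0 (DeltaB R n 2) (bt R ![vN n 0, .F]) =
      (∑ g : Fin 2 → Fin n, if Cnd n 2 g then bt R ![vN n 0, .e (g 0), .e (g 1)] else 0) +
        (bt R ![vN n 0, vN n 0, .F] + bt R ![vN n 0, .F, vN n (n - 1)]) := by
  rw [opp_bt, dif_pos (by omega), sgn_zero_mul, one_smul]
  simp only [show (⟨1, by omega⟩ : Fin 2) = 1 from rfl, Matrix.cons_val_one, Matrix.head_cons,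
    Matrix.cons_val_zero]
  rw [DeltaB2_F h, mapDomain_add', mapDomain_add', mapDomain_esum,
    bt, bt, Finsupp.mapDomain_single, Finsupp.mapDomain_single, splice_2_1_2, splice_2_1_2]
  simp only [Matrix.cons_val_zero, Matrix.cons_val_one, Matrix.head_cons]
  congr 1
  refine Finset.sum_congr rfl fun g _ => ?_
  split_ifs with hc
  · rw [bt, Finsupp.mapDomain_single, splice_2_1_2]
    simp only [Matrix.cons_val_zero]
    rfl
  · rfl

lemma oppL_U2 (h : 0 < n) :
    opp R n 2 3 2 0 0 (DeltaB R n 2) (bt R ![.F, vN n (n - 1)]) =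
      (∑ g : Fin 2 → Fin n, if Cnd n 2 g then bt R ![.e (g 0), .e (g 1), vN n (n - 1)] else 0) +
        (bt R ![vN n 0, .F, vN n (n - 1)] + bt R ![.F, vN n (n - 1), vN n (n - 1)]) := by
  rw [opp_bt, dif_pos (by omega), sgn_zero_mul, one_smul]
  simp only [show (⟨0, by omega⟩ : Fin 2) = 0 from rfl, Matrix.cons_val_zero]
  rw [DeltaB2_F h, mapDomain_add', mapDomain_add', mapDomain_esum,
    bt, bt, Finsupp.mapDomain_single, Finsupp.mapDomain_single, splice_2_0_2, splice_2_0_2]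
  simp only [Matrix.cons_val_zero, Matrix.cons_val_one, Matrix.head_cons]
  congr 1
  refine Finset.sum_congr rfl fun g _ => ?_
  split_ifs with hc
  · rw [bt, Finsupp.mapDomain_single, splice_2_0_2]
    simp only [Matrix.cons_val_one, Matrix.head_cons]
    rfl
  · rfl

end Helper5

noncomputable section Helper6
variable {R : Type} [CommRing R] {n : ℕ}

def e3 (n : ℕ) : (Fin n × Fin n × Fin n) ≃ (Fin 3 → Fin n) where
  toFun a := ![a.1, a.2.1, a.2.2]
  invFun f := (f 0, f 1, f 2)
  left_inv := by rintro ⟨a, b, c⟩; simp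
  right_inv := by
    intro f; funext p; fin_cases p <;> simp

def e2 (n : ℕ) : (Fin n × Fin n) ≃ (Fin 2 → Fin n) where
  toFun a := ![a.1, a.2]
  invFun f := (f 0, f 1)
  left_inv := by rintro ⟨a, b⟩; simp
  right_inv := by
    intro f; funext p; fin_cases p <;> simp

lemma Cnd3_iff (i j k : Fin n) :
    Cnd n 3 ![i, j, k] ↔
      ((i : ℕ) < j ∧ (j : ℕ) < k ∧ (i : ℕ) + 1 < n ∧ (j : ℕ) + 1 < n ∧ (k : ℕ) + 1 < n) := by
  constructor
  · rintro ⟨hm, hb⟩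
    exact ⟨hm 0 1 (by decide), hm 1 2 (by decide), hb 0, hb 1, hb 2⟩
  · rintro ⟨h1, h2, h3, h4, h5⟩
    have e0 : (![i,j,k]) 0 = i := rfl
    have e1 : (![i,j,k]) 1 = j := rfl
    have e2 : (![i,j,k]) 2 = k := rfl
    constructor
    · intro p q hpq
      fin_cases p <;> fin_cases q <;>
        simp only [Fin.mk_zero, Fin.mk_one, show (⟨2, by omega⟩ : Fin 3) = 2 from rfl,
          e0, e1, e2] <;>
        first
          | exact absurd hpq (by decide)
          | (rw [Fin.lt_def]; omega)
    · intro p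
      fin_cases p <;>
        simp only [Fin.mk_zero, Fin.mk_one, show (⟨2, by omega⟩ : Fin 3) = 2 from rfl,
          e0, e1, e2] <;>
        omega

lemma Cnd2_iff (i j : Fin n) :
    Cnd n 2 ![i, j] ↔ ((i : ℕ) < j ∧ (i : ℕ) + 1 < n ∧ (j : ℕ) + 1 < n) := by
  constructor
  · rintro ⟨hm, hb⟩
    exact ⟨hm 0 1 (by decide), hb 0, hb 1⟩
  · rintro ⟨h1, h2, h3⟩
    have e0 : (![i,j]) 0 = i := rfl
    have e1 : (![i,j]) 1 = j := rfl
    constructor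
    · intro p q hpq
      fin_cases p <;> fin_cases q <;>
        simp only [Fin.mk_zero, Fin.mk_one, e0, e1] <;>
        first
          | exact absurd hpq (by decide)
          | (rw [Fin.lt_def]; omega)
    · intro p
      fin_cases p <;> simp only [Fin.mk_zero, Fin.mk_one, e0, e1] <;> omega

lemma sum3_eq {M : Type} [AddCommMonoid M] (W : ℕ → ℕ → ℕ → M) :
    (∑ f : Fin 3 → Fin n, if Cnd n 3 f then W (f 0) (f 1) (f 2) else 0)
      = ∑ i ∈ Finset.range n, ∑ j ∈ Finset.range n, ∑ k ∈ Finset.range n,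
          if i < j ∧ j < k ∧ i + 1 < n ∧ j + 1 < n ∧ k + 1 < n then W i j k else 0 := by
  rw [← Fintype.sum_equiv (e3 n)
      (fun a => if Cnd n 3 (e3 n a) then W (e3 n a 0) (e3 n a 1) (e3 n a 2) else 0)
      (fun f => if Cnd n 3 f then W (f 0) (f 1) (f 2) else 0) (fun a => rfl)]
  rw [Fintype.sum_prod_type]
  simp only [Fintype.sum_prod_type]
  have : ∀ (i j k : Fin n),
      (if Cnd n 3 (e3 n (i, j, k)) then W (e3 n (i,j,k) 0) (e3 n (i,j,k) 1) (e3 n (i,j,k) 2) else 0)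
        = (if (i : ℕ) < j ∧ (j : ℕ) < k ∧ (i : ℕ) + 1 < n ∧ (j : ℕ) + 1 < n ∧ (k : ℕ) + 1 < n
            then W i j k else 0) := by
    intro i j k
    exact if_congr (Cnd3_iff i j k) rfl rfl
  simp only [this]
  rw [Fin.sum_univ_eq_sum_range (fun i => ∑ j : Fin n, ∑ k : Fin n,
    if i < (j:ℕ) ∧ (j:ℕ) < k ∧ i + 1 < n ∧ (j:ℕ) + 1 < n ∧ (k:ℕ) + 1 < n then W i j k else 0)]
  refine Finset.sum_congr rfl fun i _ => ?_
  rw [Fin.sum_univ_eq_sum_range (fun j => ∑ k : Fin n,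
    if i < j ∧ j < (k:ℕ) ∧ i + 1 < n ∧ j + 1 < n ∧ (k:ℕ) + 1 < n then W i j k else 0)]
  refine Finset.sum_congr rfl fun j _ => ?_
  rw [Fin.sum_univ_eq_sum_range (fun k =>
    if i < j ∧ j < k ∧ i + 1 < n ∧ j + 1 < n ∧ k + 1 < n then W i j k else 0)]

lemma sum2_eq {M : Type} [AddCommMonoid M] (W : ℕ → ℕ → M) :
    (∑ f : Fin 2 → Fin n, if Cnd n 2 f then W (f 0) (f 1) else 0)
      = ∑ i ∈ Finset.range n, ∑ j ∈ Finset.range n,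
          if i < j ∧ i + 1 < n ∧ j + 1 < n then W i j else 0 := by
  rw [← Fintype.sum_equiv (e2 n)
      (fun a => if Cnd n 2 (e2 n a) then W (e2 n a 0) (e2 n a 1) else 0)
      (fun f => if Cnd n 2 f then W (f 0) (f 1) else 0) (fun a => rfl)]
  rw [Fintype.sum_prod_type]
  have : ∀ (i j : Fin n),
      (if Cnd n 2 (e2 n (i, j)) then W (e2 n (i,j) 0) (e2 n (i,j) 1) else 0)
        = (if (i : ℕ) < j ∧ (i : ℕ) + 1 < n ∧ (j : ℕ) + 1 < n then W i j else 0) := by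
    intro i j
    exact if_congr (Cnd2_iff i j) rfl rfl
  simp only [this]
  rw [Fin.sum_univ_eq_sum_range (fun i => ∑ j : Fin n,
    if i < (j:ℕ) ∧ i + 1 < n ∧ (j:ℕ) + 1 < n then W i j else 0)]
  refine Finset.sum_congr rfl fun i _ => ?_
  rw [Fin.sum_univ_eq_sum_range (fun j =>
    if i < j ∧ i + 1 < n ∧ j + 1 < n then W i j else 0)]

end Helper6

noncomputable section Helper7
variable {n : ℕ}
open Finset

lemma claim1 {M : Type} [AddCommGroup M] (G : ℕ → ℕ → ℕ → M) :
    (∑ i ∈ range n, ∑ j ∈ range n, ∑ k ∈ range n,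
        if i < j ∧ j < k ∧ i + 1 < n ∧ j + 1 < n ∧ k + 1 < n then G (i+1) j k - G i j k else 0)
      = ∑ a ∈ range n, ∑ b ∈ range n,
          if a < b ∧ a + 1 < n ∧ b + 1 < n then G a a b - G 0 a b else 0 := by
  rw [Finset.sum_comm]
  refine Finset.sum_congr rfl fun j hj => ?_
  rw [Finset.sum_comm]
  refine Finset.sum_congr rfl fun k hk => ?_
  by_cases hc : j < k ∧ j + 1 < n ∧ k + 1 < n
  · rw [if_pos hc]
    obtain ⟨h1, h2, h3⟩ := hc
    have step1 : ∀ i ∈ range n,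
        (if i < j ∧ j < k ∧ i + 1 < n ∧ j + 1 < n ∧ k + 1 < n
          then G (i+1) j k - G i j k else 0)
          = if i < j then G (i+1) j k - G i j k else 0 := by
      intro i _; exact if_congr (by omega) rfl rfl
    rw [Finset.sum_congr rfl step1]
    rw [← Finset.sum_subset (Finset.range_subset_range.2 (show j ≤ n by omega))
        (fun x _ hx => by rw [if_neg (by simp at hx ⊢; omega)])]
    rw [Finset.sum_congr rfl (fun i hi => if_pos (Finset.mem_range.1 hi))]
    exact Finset.sum_range_sub (fun i => G i j k) j
  · rw [if_neg hc]
    exact Finset.sum_eq_zero fun i _ => by rw [if_neg (by omega)]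

lemma claim2 {M : Type} [AddCommGroup M] (G : ℕ → ℕ → ℕ → M) :
    (∑ i ∈ range n, ∑ j ∈ range n, ∑ k ∈ range n,
        if i < j ∧ j < k ∧ i + 1 < n ∧ j + 1 < n ∧ k + 1 < n then G i j k - G i (j+1) k else 0)
      = ∑ a ∈ range n, ∑ b ∈ range n,
          if a < b ∧ a + 1 < n ∧ b + 1 < n then G a (a+1) b - G a b b else 0 := by
  refine Finset.sum_congr rfl fun i hi => ?_
  rw [Finset.sum_comm]
  refine Finset.sum_congr rfl fun k hk => ?_
  by_cases hc : i < k ∧ i + 1 < n ∧ k + 1 < n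
  · rw [if_pos hc]
    obtain ⟨h1, h2, h3⟩ := hc
    have step1 : ∀ j ∈ range n,
        (if i < j ∧ j < k ∧ i + 1 < n ∧ j + 1 < n ∧ k + 1 < n
          then G i j k - G i (j+1) k else 0)
          = if j ∈ Finset.Ico (i+1) k then G i j k - G i (j+1) k else 0 := by
      intro j _; exact if_congr (by rw [Finset.mem_Ico]; omega) rfl rfl
    rw [Finset.sum_congr rfl step1]
    rw [← Finset.sum_subset (show Finset.Ico (i+1) k ⊆ range n by
          intro x hx; rw [Finset.mem_Ico] at hx; rw [Finset.mem_range]; omega)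
        (fun x _ hx => by rw [if_neg hx])]
    rw [Finset.sum_congr rfl (fun j hj => if_pos hj)]
    rw [Finset.sum_Ico_eq_sub (fun j => G i j k - G i (j+1) k) (show i+1 ≤ k by omega)]
    rw [Finset.sum_range_sub' (fun j => G i j k) k, Finset.sum_range_sub' (fun j => G i j k) (i+1)]
    abel
  · rw [if_neg hc]
    exact Finset.sum_eq_zero fun j _ => by rw [if_neg (by omega)]

lemma claim3 {M : Type} [AddCommGroup M] (G : ℕ → ℕ → ℕ → M) (hn : 3 ≤ n) :
    (∑ i ∈ range n, ∑ j ∈ range n, ∑ k ∈ range n,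
        if i < j ∧ j < k ∧ i + 1 < n ∧ j + 1 < n ∧ k + 1 < n then G i j (k+1) - G i j k else 0)
      = ∑ a ∈ range n, ∑ b ∈ range n,
          if a < b ∧ a + 1 < n ∧ b + 1 < n then G a b (n-1) - G a b (b+1) else 0 := by
  refine Finset.sum_congr rfl fun i hi => ?_
  refine Finset.sum_congr rfl fun j hj => ?_
  by_cases hc : i < j ∧ i + 1 < n ∧ j + 1 < n
  · rw [if_pos hc]
    obtain ⟨h1, h2, h3⟩ := hc
    have step1 : ∀ k ∈ range n,
        (if i < j ∧ j < k ∧ i + 1 < n ∧ j + 1 < n ∧ k + 1 < n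
          then G i j (k+1) - G i j k else 0)
          = if k ∈ Finset.Ico (j+1) (n-1) then G i j (k+1) - G i j k else 0 := by
      intro k _; exact if_congr (by rw [Finset.mem_Ico]; omega) rfl rfl
    rw [Finset.sum_congr rfl step1]
    rw [← Finset.sum_subset (show Finset.Ico (j+1) (n-1) ⊆ range n by
          intro x hx; rw [Finset.mem_Ico] at hx; rw [Finset.mem_range]; omega)
        (fun x _ hx => by rw [if_neg hx])]
    rw [Finset.sum_congr rfl (fun k hk => if_pos hk)]
    rw [Finset.sum_Ico_eq_sub (fun k => G i j (k+1) - G i j k) (show j+1 ≤ n-1 by omega)]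
    rw [Finset.sum_range_sub (fun k => G i j k) (n-1), Finset.sum_range_sub (fun k => G i j k) (j+1)]
    abel
  · rw [if_neg hc]
    exact Finset.sum_eq_zero fun k _ => by rw [if_neg (by omega)]

end Helper7

noncomputable section Helper8
variable {R : Type} [CommRing R] {n : ℕ}
open Finset

lemma A0sum : opp R n 3 3 1 0 (-1) (dB R n) (esum R n 3)
    = ∑ i ∈ range n, ∑ j ∈ range n, ∑ k ∈ range n,
        if i < j ∧ j < k ∧ i + 1 < n ∧ j + 1 < n ∧ k + 1 < n then
          bt R ![vN n (i+1), eN n j, eN n k] - bt R ![vN n i, eN n j, eN n k] else 0 := by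
  rw [lmap_esum]
  rw [← sum3_eq (fun i j k => bt R ![vN n (i+1), eN n j, eN n k] - bt R ![vN n i, eN n j, eN n k])]
  refine Finset.sum_congr rfl fun f _ => ?_
  split_ifs with h
  · rw [oppA0 f (h.2 0), eN_coe (f 1), eN_coe (f 2)]
  · rfl

lemma A1sum : opp R n 3 3 1 1 (-1) (dB R n) (esum R n 3)
    = ∑ i ∈ range n, ∑ j ∈ range n, ∑ k ∈ range n,
        if i < j ∧ j < k ∧ i + 1 < n ∧ j + 1 < n ∧ k + 1 < n then
          bt R ![eN n i, vN n j, eN n k] - bt R ![eN n i, vN n (j+1), eN n k] else 0 := by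
  rw [lmap_esum]
  rw [← sum3_eq (fun i j k => bt R ![eN n i, vN n j, eN n k] - bt R ![eN n i, vN n (j+1), eN n k])]
  refine Finset.sum_congr rfl fun f _ => ?_
  split_ifs with h
  · rw [oppA1 f (h.2 1), eN_coe (f 0), eN_coe (f 2)]
  · rfl

lemma A2sum : opp R n 3 3 1 2 (-1) (dB R n) (esum R n 3)
    = ∑ i ∈ range n, ∑ j ∈ range n, ∑ k ∈ range n,
        if i < j ∧ j < k ∧ i + 1 < n ∧ j + 1 < n ∧ k + 1 < n then
          bt R ![eN n i, eN n j, vN n (k+1)] - bt R ![eN n i, eN n j, vN n k] else 0 := by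
  rw [lmap_esum]
  rw [← sum3_eq (fun i j k => bt R ![eN n i, eN n j, vN n (k+1)] - bt R ![eN n i, eN n j, vN n k])]
  refine Finset.sum_congr rfl fun f _ => ?_
  split_ifs with h
  · rw [oppA2 f (h.2 2), eN_coe (f 0), eN_coe (f 1)]
  · rfl

lemma Lsum : opp R n 2 3 2 0 0 (DeltaB R n 2) (esum R n 2)
    = ∑ a ∈ range n, ∑ b ∈ range n,
        if a < b ∧ a + 1 < n ∧ b + 1 < n then
          bt R ![vN n a, eN n a, eN n b] + bt R ![eN n a, vN n (a+1), eN n b] else 0 := by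
  rw [lmap_esum]
  rw [← sum2_eq (fun a b => bt R ![vN n a, eN n a, eN n b] + bt R ![eN n a, vN n (a+1), eN n b])]
  refine Finset.sum_congr rfl fun g _ => ?_
  split_ifs with h
  · rw [oppL_pair g (h.2 0), eN_coe (g 0), eN_coe (g 1), vN_coe (g 0)]
  · rfl

lemma Rsum : opp R n 2 3 2 1 0 (DeltaB R n 2) (esum R n 2)
    = ∑ a ∈ range n, ∑ b ∈ range n,
        if a < b ∧ a + 1 < n ∧ b + 1 < n then
          bt R ![eN n a, vN n b, eN n b] + bt R ![eN n a, eN n b, vN n (b+1)] else 0 := by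
  rw [lmap_esum]
  rw [← sum2_eq (fun a b => bt R ![eN n a, vN n b, eN n b] + bt R ![eN n a, eN n b, vN n (b+1)])]
  refine Finset.sum_congr rfl fun g _ => ?_
  split_ifs with h
  · rw [oppR_pair g (h.2 1), eN_coe (g 0), eN_coe (g 1), vN_coe (g 1)]
  · rfl

lemma U1conv : (∑ g : Fin 2 → Fin n, if Cnd n 2 g then bt R ![vN n 0, .e (g 0), .e (g 1)] else 0)
    = ∑ a ∈ range n, ∑ b ∈ range n,
        if a < b ∧ a + 1 < n ∧ b + 1 < n then bt R ![vN n 0, eN n a, eN n b] else 0 := by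
  rw [← sum2_eq (fun a b => bt R ![vN n 0, eN n a, eN n b])]
  refine Finset.sum_congr rfl fun g _ => ?_
  split_ifs with h
  · rw [eN_coe (g 0), eN_coe (g 1)]
  · rfl

lemma U2conv : (∑ g : Fin 2 → Fin n, if Cnd n 2 g then bt R ![.e (g 0), .e (g 1), vN n (n-1)] else 0)
    = ∑ a ∈ range n, ∑ b ∈ range n,
        if a < b ∧ a + 1 < n ∧ b + 1 < n then bt R ![eN n a, eN n b, vN n (n-1)] else 0 := by
  rw [← sum2_eq (fun a b => bt R ![eN n a, eN n b, vN n (n-1)])]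
  refine Finset.sum_congr rfl fun g _ => ?_
  split_ifs with h
  · rw [eN_coe (g 0), eN_coe (g 1)]
  · rfl

lemma sum2_split {M : Type} [AddCommGroup M] (c : ℕ → ℕ → Prop) [∀ a b, Decidable (c a b)]
    (X Y : ℕ → ℕ → M) :
    (∑ a ∈ range n, ∑ b ∈ range n, if c a b then X a b + Y a b else 0)
      = (∑ a ∈ range n, ∑ b ∈ range n, if c a b then X a b else 0)
        + (∑ a ∈ range n, ∑ b ∈ range n, if c a b then Y a b else 0) := by
  rw [← Finset.sum_add_distrib]
  refine Finset.sum_congr rfl fun a _ => ?_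
  rw [← Finset.sum_add_distrib]
  refine Finset.sum_congr rfl fun b _ => ?_
  split_ifs <;> simp

lemma sum2_split_sub {M : Type} [AddCommGroup M] (c : ℕ → ℕ → Prop) [∀ a b, Decidable (c a b)]
    (X Y : ℕ → ℕ → M) :
    (∑ a ∈ range n, ∑ b ∈ range n, if c a b then X a b - Y a b else 0)
      = (∑ a ∈ range n, ∑ b ∈ range n, if c a b then X a b else 0)
        - (∑ a ∈ range n, ∑ b ∈ range n, if c a b then Y a b else 0) := by
  rw [← Finset.sum_sub_distrib]
  refine Finset.sum_congr rfl fun a _ => ?_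
  rw [← Finset.sum_sub_distrib]
  refine Finset.sum_congr rfl fun b _ => ?_
  split_ifs <;> simp

end Helper8

/-- In `C^{⊗3}` one has
`[(∂⊗1⊗1 + 1⊗∂⊗1 + 1⊗1⊗∂) ∘ Δ₃ + (−Δ₂⊗1 + 1⊗Δ₂) ∘ Δ₂](P) = 0`, the tensor products of maps
being evaluated with the Koszul sign convention: `Δ₃` is a chain homotopy between `(Δ₂⊗1)Δ₂`
and `(1⊗Δ₂)Δ₂` evaluated at the 2-cell `P`. -/
theorem delta3_homotopy (R : Type) [CommRing R] (n : ℕ) (hn : 3 ≤ n) :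
    ((opp R n 3 3 1 0 (-1) (dB R n) + opp R n 3 3 1 1 (-1) (dB R n) +
        opp R n 3 3 1 2 (-1) (dB R n)) ((Dmap R n 3) (cellP R n))) +
      ((-(opp R n 2 3 2 0 0 (DeltaB R n 2)) + opp R n 2 3 2 1 0 (DeltaB R n 2))
        ((Dmap R n 2) (cellP R n))) = 0 := by
  have h0 : 0 < n := by omega
  rw [Dmap_cellP, Dmap_cellP, DeltaB3_F, DeltaB2_F h0]
  simp only [LinearMap.add_apply, LinearMap.neg_apply, map_add]
  rw [oppL_U1 h0, oppR_U1 h0, oppL_U2 h0, oppR_U2 h0, A0sum, A1sum, A2sum, Lsum, Rsum,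
    U1conv, U2conv]
  rw [claim1 (fun i j k => bt R ![vN n i, eN n j, eN n k]),
      claim2 (fun i j k => bt R ![eN n i, vN n j, eN n k]),
      claim3 (fun i j k => bt R ![eN n i, eN n j, vN n k]) hn]
  rw [sum2_split_sub (fun a b => a < b ∧ a + 1 < n ∧ b + 1 < n)
        (fun a b => bt R ![vN n a, eN n a, eN n b]) (fun a b => bt R ![vN n 0, eN n a, eN n b]),
      sum2_split_sub (fun a b => a < b ∧ a + 1 < n ∧ b + 1 < n)
        (fun a b => bt R ![eN n a, vN n (a+1), eN n b]) (fun a b => bt R ![eN n a, vN n b, eN n b]),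
      sum2_split_sub (fun a b => a < b ∧ a + 1 < n ∧ b + 1 < n)
        (fun a b => bt R ![eN n a, eN n b, vN n (n-1)])
        (fun a b => bt R ![eN n a, eN n b, vN n (b+1)]),
      sum2_split (fun a b => a < b ∧ a + 1 < n ∧ b + 1 < n)
        (fun a b => bt R ![vN n a, eN n a, eN n b])
        (fun a b => bt R ![eN n a, vN n (a+1), eN n b]),
      sum2_split (fun a b => a < b ∧ a + 1 < n ∧ b + 1 < n)
        (fun a b => bt R ![eN n a, vN n b, eN n b])
        (fun a b => bt R ![eN n a, eN n b, vN n (b+1)])]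
  abel
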